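/- Let n = 4, κ = 3, f(x) = −x₁ + x₃² + x₄², F₁(x) = (x₁, x₁ + x₂, x₃ − 1), F₂(x) = (2 − x₃, 1 − x₄, 1 + x₄). For every fixed t with 0 < t ≤ 2 and every z ∈ [−t, 0], the point x_z = (t, z, 1, 0) is a KKT point of the Scholtes regularization S(t), and every such x_z is degenerate: for z = −t the unique multipliers are η₁ = 1, ν₁,₂ = 0, ν₁,₃ = 2 − t so ND2 fails; for z = 0 the unique multipliers are η₁ = 1, η₂ = 0, ν₁,₃ = 2 − t so ND2 fails; for z ∈ (−t, 0) the unique multipliers are η₁ = 1, ν₁,₃ = 2 − t and ND3 fails. In particular, S(t) possesses a continuum of KKT points in any neighborhood of x̄ = (0,0,1,0) for small t. -/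

import Mathlib

open Filter Topology Set

namespace MPCCPaper

variable {n κ : ℕ}

/-- Differential of the `j`-th component of `F` at `x`. -/
noncomputable def Dc (F : (Fin n → ℝ) → Fin κ → ℝ) (j : Fin κ) (x : Fin n → ℝ) :
    (Fin n → ℝ) →L[ℝ] ℝ :=
  fderiv ℝ (fun y => F y j) x

/-- The MPCC feasible set `M`. -/
def Mset (F1 F2 : (Fin n → ℝ) → Fin κ → ℝ) : Set (Fin n → ℝ) :=
  {x | ∀ j, F1 x j * F2 x j = 0 ∧ 0 ≤ F1 x j ∧ 0 ≤ F2 x j}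

/-- Feasible set `M^S(t)` of the Scholtes regularization. -/
def MS (F1 F2 : (Fin n → ℝ) → Fin κ → ℝ) (t : ℝ) : Set (Fin n → ℝ) :=
  {x | ∀ j, F1 x j * F2 x j ≤ t ∧ 0 ≤ F1 x j ∧ 0 ≤ F2 x j}

/-- Feasible set `M^{S=}(t)` of the smoothing with equality constraints. -/
def MSeq (F1 F2 : (Fin n → ℝ) → Fin κ → ℝ) (t : ℝ) : Set (Fin n → ℝ) :=
  {x | ∀ j, F1 x j * F2 x j = t ∧ 0 ≤ F1 x j ∧ 0 ≤ F2 x j}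

def a01 (F1 F2 : (Fin n → ℝ) → Fin κ → ℝ) (x : Fin n → ℝ) : Set (Fin κ) :=
  {j | F1 x j = 0 ∧ 0 < F2 x j}

def a10 (F1 F2 : (Fin n → ℝ) → Fin κ → ℝ) (x : Fin n → ℝ) : Set (Fin κ) :=
  {j | 0 < F1 x j ∧ F2 x j = 0}

def a00 (F1 F2 : (Fin n → ℝ) → Fin κ → ℝ) (x : Fin n → ℝ) : Set (Fin κ) :=
  {j | F1 x j = 0 ∧ F2 x j = 0}

/-- Active set `H(x)` of the regularized constraints. -/
def Hset (F1 F2 : (Fin n → ℝ) → Fin κ → ℝ) (t : ℝ) (x : Fin n → ℝ) : Set (Fin κ) :=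
  {j | F1 x j * F2 x j = t}

def N1set (F1 : (Fin n → ℝ) → Fin κ → ℝ) (x : Fin n → ℝ) : Set (Fin κ) :=
  {j | F1 x j = 0}

def N2set (F2 : (Fin n → ℝ) → Fin κ → ℝ) (x : Fin n → ℝ) : Set (Fin κ) :=
  {j | F2 x j = 0}

/-- MPCC-tailored linear independence constraint qualification. -/
def MPCCLICQ (F1 F2 : (Fin n → ℝ) → Fin κ → ℝ) (x : Fin n → ℝ) : Prop :=
  LinearIndependent ℝ
    (Sum.elim
      (fun j : ↥(a01 F1 F2 x ∪ a00 F1 F2 x) => Dc F1 j.1 x)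
      (fun j : ↥(a10 F1 F2 x ∪ a00 F1 F2 x) => Dc F2 j.1 x))

/-- Gradient of the product constraint `F1_j · F2_j` at `x`. -/
noncomputable def gradProd (F1 F2 : (Fin n → ℝ) → Fin κ → ℝ) (j : Fin κ) (x : Fin n → ℝ) :
    (Fin n → ℝ) →L[ℝ] ℝ :=
  F2 x j • Dc F1 j x + F1 x j • Dc F2 j x

/-- LICQ for the Scholtes regularization `S(t)`. -/
def SLICQ (F1 F2 : (Fin n → ℝ) → Fin κ → ℝ) (t : ℝ) (x : Fin n → ℝ) : Prop :=
  LinearIndependent ℝ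
    (Sum.elim (fun j : ↥(Hset F1 F2 t x) => gradProd F1 F2 j.1 x)
      (Sum.elim (fun j : ↥(N1set F1 x) => Dc F1 j.1 x)
        (fun j : ↥(N2set F2 x) => Dc F2 j.1 x)))

/-- W-stationarity with prescribed multipliers (supported on the active index sets). -/
structure WStatWith (f : (Fin n → ℝ) → ℝ) (F1 F2 : (Fin n → ℝ) → Fin κ → ℝ)
    (x : Fin n → ℝ) (σ1 σ2 ϱ1 ϱ2 : Fin κ → ℝ) : Prop where
  feas : x ∈ Mset F1 F2
  supp_s1 : ∀ j, j ∉ a01 F1 F2 x → σ1 j = 0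
  supp_s2 : ∀ j, j ∉ a10 F1 F2 x → σ2 j = 0
  supp_r1 : ∀ j, j ∉ a00 F1 F2 x → ϱ1 j = 0
  supp_r2 : ∀ j, j ∉ a00 F1 F2 x → ϱ2 j = 0
  stat : fderiv ℝ f x =
    ∑ j, (σ1 j • Dc F1 j x + σ2 j • Dc F2 j x + ϱ1 j • Dc F1 j x + ϱ2 j • Dc F2 j x)

/-- C-stationarity with prescribed multipliers. -/
def CStatWith (f : (Fin n → ℝ) → ℝ) (F1 F2 : (Fin n → ℝ) → Fin κ → ℝ)
    (x : Fin n → ℝ) (σ1 σ2 ϱ1 ϱ2 : Fin κ → ℝ) : Prop :=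
  WStatWith f F1 F2 x σ1 σ2 ϱ1 ϱ2 ∧ ∀ j ∈ a00 F1 F2 x, 0 ≤ ϱ1 j * ϱ2 j

/-- S-stationarity with prescribed multipliers. -/
def SStatWith (f : (Fin n → ℝ) → ℝ) (F1 F2 : (Fin n → ℝ) → Fin κ → ℝ)
    (x : Fin n → ℝ) (σ1 σ2 ϱ1 ϱ2 : Fin κ → ℝ) : Prop :=
  WStatWith f F1 F2 x σ1 σ2 ϱ1 ϱ2 ∧ ∀ j ∈ a00 F1 F2 x, 0 ≤ ϱ1 j ∧ 0 ≤ ϱ2 j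

/-- The MPCC Lagrange function for given multipliers. -/
noncomputable def Lag (f : (Fin n → ℝ) → ℝ) (F1 F2 : (Fin n → ℝ) → Fin κ → ℝ)
    (σ1 σ2 ϱ1 ϱ2 : Fin κ → ℝ) (x : Fin n → ℝ) : ℝ :=
  f x - ∑ j, (σ1 j * F1 x j + σ2 j * F2 x j + ϱ1 j * F1 x j + ϱ2 j * F2 x j)

/-- The Hessian of `g` at `x` as a bilinear map, evaluated at `(ξ, ζ)`. -/
noncomputable def hBil (g : (Fin n → ℝ) → ℝ) (x ξ ζ : Fin n → ℝ) : ℝ :=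
  iteratedFDeriv ℝ 2 g x ![ξ, ζ]

/-- The Hessian quadratic form of `g` at `x`. -/
noncomputable def hQ (g : (Fin n → ℝ) → ℝ) (x ξ : Fin n → ℝ) : ℝ := hBil g x ξ ξ

/-- The tangent space `T_x` of MPCC at `x`. -/
def Tspace (F1 F2 : (Fin n → ℝ) → Fin κ → ℝ) (x : Fin n → ℝ) : Set (Fin n → ℝ) :=
  {ξ | (∀ j ∈ a01 F1 F2 x ∪ a00 F1 F2 x, Dc F1 j x ξ = 0) ∧
       (∀ j ∈ a10 F1 F2 x ∪ a00 F1 F2 x, Dc F2 j x ξ = 0)}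

/-- Nondegeneracy of a bilinear form on a set (subspace). -/
def NondegOn (B : (Fin n → ℝ) → (Fin n → ℝ) → ℝ) (T : Set (Fin n → ℝ)) : Prop :=
  ∀ ξ ∈ T, (∀ ζ ∈ T, B ξ ζ = 0) → ξ = 0

/-- `Q` has negative index `q` on `T`: `q` is the maximal dimension of a subspace of `T`
on which `Q` is negative definite. -/
def HasNegIndexOn (Q : (Fin n → ℝ) → ℝ) (T : Set (Fin n → ℝ)) (q : ℕ) : Prop :=
  (∃ W : Submodule ℝ (Fin n → ℝ), (W : Set (Fin n → ℝ)) ⊆ T ∧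
      Module.finrank ℝ ↥W = q ∧ ∀ ξ ∈ W, ξ ≠ 0 → Q ξ < 0) ∧
  (∀ W : Submodule ℝ (Fin n → ℝ), (W : Set (Fin n → ℝ)) ⊆ T →
      (∀ ξ ∈ W, ξ ≠ 0 → Q ξ < 0) → Module.finrank ℝ ↥W ≤ q)

/-- Nondegenerate C-stationary point (NDC1, NDC2, NDC3) with prescribed multipliers. -/
def NondegCStat (f : (Fin n → ℝ) → ℝ) (F1 F2 : (Fin n → ℝ) → Fin κ → ℝ)
    (x : Fin n → ℝ) (σ1 σ2 ϱ1 ϱ2 : Fin κ → ℝ) : Prop :=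
  CStatWith f F1 F2 x σ1 σ2 ϱ1 ϱ2 ∧ MPCCLICQ F1 F2 x ∧
  (∀ j ∈ a00 F1 F2 x, 0 < ϱ1 j * ϱ2 j) ∧
  NondegOn (hBil (Lag f F1 F2 σ1 σ2 ϱ1 ϱ2) x) (Tspace F1 F2 x)

/-- Condition NDC4: non-biactive multipliers do not vanish. -/
def NDC4 (F1 F2 : (Fin n → ℝ) → Fin κ → ℝ) (x : Fin n → ℝ) (σ1 σ2 : Fin κ → ℝ) : Prop :=
  (∀ j ∈ a01 F1 F2 x, σ1 j ≠ 0) ∧ (∀ j ∈ a10 F1 F2 x, σ2 j ≠ 0)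

/-- The biactive index: number of negative biactive multiplier pairs. -/
noncomputable def BIndex (F1 F2 : (Fin n → ℝ) → Fin κ → ℝ) (x : Fin n → ℝ)
    (ϱ1 ϱ2 : Fin κ → ℝ) : ℕ :=
  {j | j ∈ a00 F1 F2 x ∧ ϱ1 j < 0 ∧ ϱ2 j < 0}.ncard

/-- The C-index of a C-stationary point equals `c`. -/
def HasCIndex (f : (Fin n → ℝ) → ℝ) (F1 F2 : (Fin n → ℝ) → Fin κ → ℝ)
    (x : Fin n → ℝ) (σ1 σ2 ϱ1 ϱ2 : Fin κ → ℝ) (c : ℕ) : Prop :=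
  ∃ q : ℕ,
    HasNegIndexOn (hQ (Lag f F1 F2 σ1 σ2 ϱ1 ϱ2) x) (Tspace F1 F2 x) q ∧
    c = q + BIndex F1 F2 x ϱ1 ϱ2

/-- Karush-Kuhn-Tucker point of the Scholtes regularization `S(t)` with multipliers. -/
structure KKTWith (f : (Fin n → ℝ) → ℝ) (F1 F2 : (Fin n → ℝ) → Fin κ → ℝ)
    (t : ℝ) (x : Fin n → ℝ) (η ν1 ν2 : Fin κ → ℝ) : Prop where
  feas : x ∈ MS F1 F2 t
  eta_nn : ∀ j, 0 ≤ η j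
  nu1_nn : ∀ j, 0 ≤ ν1 j
  nu2_nn : ∀ j, 0 ≤ ν2 j
  comp_eta : ∀ j, η j * (t - F1 x j * F2 x j) = 0
  comp_nu1 : ∀ j, ν1 j * F1 x j = 0
  comp_nu2 : ∀ j, ν2 j * F2 x j = 0
  stat : fderiv ℝ f x =
    ∑ j, (-(η j) • gradProd F1 F2 j x + ν1 j • Dc F1 j x + ν2 j • Dc F2 j x)

/-- The Lagrange function of the Scholtes regularization `S(t)`. -/
noncomputable def LagS (f : (Fin n → ℝ) → ℝ) (F1 F2 : (Fin n → ℝ) → Fin κ → ℝ)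
    (t : ℝ) (η ν1 ν2 : Fin κ → ℝ) (x : Fin n → ℝ) : ℝ :=
  f x - ∑ j, (η j * (t - F1 x j * F2 x j) + ν1 j * F1 x j + ν2 j * F2 x j)

/-- The tangent space `T^S_x` of `S(t)` at `x`. -/
def TspaceS (F1 F2 : (Fin n → ℝ) → Fin κ → ℝ) (t : ℝ) (x : Fin n → ℝ) :
    Set (Fin n → ℝ) :=
  {ξ | (∀ j ∈ Hset F1 F2 t x, gradProd F1 F2 j x ξ = 0) ∧
       (∀ j ∈ N1set F1 x, Dc F1 j x ξ = 0) ∧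
       (∀ j ∈ N2set F2 x, Dc F2 j x ξ = 0)}

/-- Nondegenerate KKT point of `S(t)` (ND1, ND2, ND3) with prescribed multipliers. -/
def NondegKKT (f : (Fin n → ℝ) → ℝ) (F1 F2 : (Fin n → ℝ) → Fin κ → ℝ)
    (t : ℝ) (x : Fin n → ℝ) (η ν1 ν2 : Fin κ → ℝ) : Prop :=
  KKTWith f F1 F2 t x η ν1 ν2 ∧ SLICQ F1 F2 t x ∧
  (∀ j ∈ Hset F1 F2 t x, 0 < η j) ∧
  (∀ j ∈ N1set F1 x, 0 < ν1 j) ∧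
  (∀ j ∈ N2set F2 x, 0 < ν2 j) ∧
  NondegOn (hBil (LagS f F1 F2 t η ν1 ν2) x) (TspaceS F1 F2 t x)

/-- KKT point of the smoothing `S^=(t)` with multipliers. -/
structure KKTEqWith (f : (Fin n → ℝ) → ℝ) (F1 F2 : (Fin n → ℝ) → Fin κ → ℝ)
    (t : ℝ) (x : Fin n → ℝ) (lam ν1 ν2 : Fin κ → ℝ) : Prop where
  feas : x ∈ MSeq F1 F2 t
  nu1_nn : ∀ j, 0 ≤ ν1 j
  nu2_nn : ∀ j, 0 ≤ ν2 j
  comp_nu1 : ∀ j, ν1 j * F1 x j = 0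
  comp_nu2 : ∀ j, ν2 j * F2 x j = 0
  stat : fderiv ℝ f x =
    ∑ j, (lam j • gradProd F1 F2 j x + ν1 j • Dc F1 j x + ν2 j • Dc F2 j x)

/-- The Lagrange function of the smoothing `S^=(t)`. -/
noncomputable def LagSeq (f : (Fin n → ℝ) → ℝ) (F1 F2 : (Fin n → ℝ) → Fin κ → ℝ)
    (t : ℝ) (lam ν1 ν2 : Fin κ → ℝ) (x : Fin n → ℝ) : ℝ :=
  f x - ∑ j, (lam j * (F1 x j * F2 x j - t) + ν1 j * F1 x j + ν2 j * F2 x j)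

/-- The tangent space `T^{S=}_x` of `S^=(t)` at `x`. -/
def TspaceSeq (F1 F2 : (Fin n → ℝ) → Fin κ → ℝ) (x : Fin n → ℝ) : Set (Fin n → ℝ) :=
  {ξ | (∀ j, gradProd F1 F2 j x ξ = 0) ∧
       (∀ j, F1 x j = 0 → Dc F1 j x ξ = 0) ∧
       (∀ j, F2 x j = 0 → Dc F2 j x ξ = 0)}

/-- LICQ for the smoothing `S^=(t)` at `x`: gradients of all active constraints
(all equality constraints together with the active bound constraints) are linearly
independent. -/
def SeqLICQ (F1 F2 : (Fin n → ℝ) → Fin κ → ℝ) (x : Fin n → ℝ) : Prop :=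
  LinearIndependent ℝ
    (Sum.elim (fun j : Fin κ => gradProd F1 F2 j x)
      (Sum.elim (fun j : ↥(N1set F1 x) => Dc F1 j.1 x)
        (fun j : ↥(N2set F2 x) => Dc F2 j.1 x)))

/-- Nondegenerate KKT point of the smoothing `S^=(t)` with prescribed multipliers. -/
def NondegKKTEq (f : (Fin n → ℝ) → ℝ) (F1 F2 : (Fin n → ℝ) → Fin κ → ℝ)
    (t : ℝ) (x : Fin n → ℝ) (lam ν1 ν2 : Fin κ → ℝ) : Prop :=
  KKTEqWith f F1 F2 t x lam ν1 ν2 ∧ SeqLICQ F1 F2 x ∧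
  (∀ j ∈ N1set F1 x, 0 < ν1 j) ∧
  (∀ j ∈ N2set F2 x, 0 < ν2 j) ∧
  NondegOn (hBil (LagSeq f F1 F2 t lam ν1 ν2) x) (TspaceSeq F1 F2 x)

/-- The critical cone `C_x` associated with an S-stationary point and its multipliers. -/
def Ccone (F1 F2 : (Fin n → ℝ) → Fin κ → ℝ) (x : Fin n → ℝ)
    (σ1 σ2 ϱ1 ϱ2 : Fin κ → ℝ) : Set (Fin n → ℝ) :=
  {ξ | (∀ j, ((j ∈ a01 F1 F2 x ∧ σ1 j ≠ 0) ∨ (j ∈ a00 F1 F2 x ∧ 0 < ϱ1 j)) →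
        Dc F1 j x ξ = 0) ∧
       (∀ j, ((j ∈ a10 F1 F2 x ∧ σ2 j ≠ 0) ∨ (j ∈ a00 F1 F2 x ∧ 0 < ϱ2 j)) →
        Dc F2 j x ξ = 0)}

/-- The cone `C^=_x` of critical directions used for MPCC-SOC. -/
def CconeEq (F1 F2 : (Fin n → ℝ) → Fin κ → ℝ) (x : Fin n → ℝ)
    (ϱ1 ϱ2 : Fin κ → ℝ) : Set (Fin n → ℝ) :=
  {ξ | (∀ j, (j ∈ a01 F1 F2 x ∨ (j ∈ a00 F1 F2 x ∧ 0 < ϱ1 j)) → Dc F1 j x ξ = 0) ∧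
       (∀ j, (j ∈ a10 F1 F2 x ∨ (j ∈ a00 F1 F2 x ∧ 0 < ϱ2 j)) → Dc F2 j x ξ = 0) ∧
       (∀ j ∈ a00 F1 F2 x, ϱ1 j = 0 → 0 ≤ Dc F1 j x ξ) ∧
       (∀ j ∈ a00 F1 F2 x, ϱ2 j = 0 → 0 ≤ Dc F2 j x ξ)}

/-- Strong second order sufficiency condition. -/
def SSOSC (f : (Fin n → ℝ) → ℝ) (F1 F2 : (Fin n → ℝ) → Fin κ → ℝ)
    (x : Fin n → ℝ) (σ1 σ2 ϱ1 ϱ2 : Fin κ → ℝ) : Prop :=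
  ∀ ξ ∈ Ccone F1 F2 x σ1 σ2 ϱ1 ϱ2, ξ ≠ 0 → 0 < hQ (Lag f F1 F2 σ1 σ2 ϱ1 ϱ2) x ξ

/-- Second order condition for MPCC (MPCC-SOC). -/
def MPCCSOC (f : (Fin n → ℝ) → ℝ) (F1 F2 : (Fin n → ℝ) → Fin κ → ℝ)
    (x : Fin n → ℝ) (σ1 σ2 ϱ1 ϱ2 : Fin κ → ℝ) : Prop :=
  ∀ ξ ∈ CconeEq F1 F2 x ϱ1 ϱ2, ξ ≠ 0 → 0 < hQ (Lag f F1 F2 σ1 σ2 ϱ1 ϱ2) x ξ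

noncomputable def fEx3 : (Fin 4 → ℝ) → ℝ :=
  fun x => -x 0 + (x 2)^2 + (x 3)^2

noncomputable def F1Ex3 : (Fin 4 → ℝ) → Fin 3 → ℝ :=
  fun x => ![x 0, x 0 + x 1, x 2 - 1]

noncomputable def F2Ex3 : (Fin 4 → ℝ) → Fin 3 → ℝ :=
  fun x => ![2 - x 2, 1 - x 3, 1 + x 3]

noncomputable def xbarEx3 : Fin 4 → ℝ := ![0, 0, 1, 0]

noncomputable def σ1Ex3 : Fin 3 → ℝ := ![-1, 0, 2]

noncomputable def pj (i : Fin 4) : (Fin 4 → ℝ) →L[ℝ] ℝ := ContinuousLinearMap.proj i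
lemma pj_apply (i : Fin 4) (y : Fin 4 → ℝ) : pj i y = y i := rfl
lemma hasF_coord (i : Fin 4) (x : Fin 4 → ℝ) :
    HasFDerivAt (fun y : Fin 4 → ℝ => y i) (pj i) x := (pj i).hasFDerivAt

lemma dc10 (x : Fin 4 → ℝ) : Dc F1Ex3 0 x = pj 0 := by
  have h : (fun y : Fin 4 → ℝ => F1Ex3 y 0) = fun y => y 0 := by funext y; simp [F1Ex3]
  rw [Dc, h]; exact (hasF_coord 0 x).fderiv

lemma dc11 (x : Fin 4 → ℝ) : Dc F1Ex3 1 x = pj 0 + pj 1 := by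
  have h : (fun y : Fin 4 → ℝ => F1Ex3 y 1) = fun y => y 0 + y 1 := by funext y; simp [F1Ex3]
  rw [Dc, h]; exact ((hasF_coord 0 x).add (hasF_coord 1 x)).fderiv

lemma dc12 (x : Fin 4 → ℝ) : Dc F1Ex3 2 x = pj 2 := by
  have h : (fun y : Fin 4 → ℝ => F1Ex3 y 2) = fun y => y 2 - 1 := by funext y; simp [F1Ex3]
  rw [Dc, h]; exact ((hasF_coord 2 x).sub_const 1).fderiv

lemma dc20 (x : Fin 4 → ℝ) : Dc F2Ex3 0 x = -pj 2 := by
  have h : (fun y : Fin 4 → ℝ => F2Ex3 y 0) = fun y => 2 - y 2 := by funext y; simp [F2Ex3]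
  rw [Dc, h]; exact ((hasF_coord 2 x).const_sub 2).fderiv

lemma dc21 (x : Fin 4 → ℝ) : Dc F2Ex3 1 x = -pj 3 := by
  have h : (fun y : Fin 4 → ℝ => F2Ex3 y 1) = fun y => 1 - y 3 := by funext y; simp [F2Ex3]
  rw [Dc, h]; exact ((hasF_coord 3 x).const_sub 1).fderiv

lemma dc22 (x : Fin 4 → ℝ) : Dc F2Ex3 2 x = pj 3 := by
  have h : (fun y : Fin 4 → ℝ => F2Ex3 y 2) = fun y => 1 + y 3 := by funext y; simp [F2Ex3]
  rw [Dc, h]; exact ((hasF_coord 3 x).const_add 1).fderiv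

lemma fderiv_fEx3 (x : Fin 4 → ℝ) :
    fderiv ℝ fEx3 x = -pj 0 + ((2 * x 2) • pj 2 + (2 * x 3) • pj 3) := by
  have hfe : fEx3 = fun y : Fin 4 → ℝ => -y 0 + y 2 * y 2 + y 3 * y 3 := by
    funext y; simp [fEx3]; ring
  have h := ((hasF_coord 0 x).neg.add ((hasF_coord 2 x).mul (hasF_coord 2 x))).add
    ((hasF_coord 3 x).mul (hasF_coord 3 x))
  rw [hfe, HasFDerivAt.fderiv (f := fun y : Fin 4 → ℝ => -y 0 + y 2 * y 2 + y 3 * y 3) h]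
  ext v
  simp [pj_apply]
  ring

lemma kkt_main (t z : ℝ) (ht : 0 < t) (ht2 : t ≤ 2) (hz1 : -t ≤ z) (hz2 : z ≤ 0) :
    KKTWith fEx3 F1Ex3 F2Ex3 t ![t, z, 1, 0] ![1, 0, 0] ![0, 0, 2 - t] 0 := by
  constructor
  · intro j
    fin_cases j <;> simp [F1Ex3, F2Ex3] <;> and_intros <;> linarith
  · intro j; fin_cases j <;> norm_num
  · intro j; fin_cases j <;> simp <;> linarith
  · intro j; norm_num
  · intro j; fin_cases j <;> simp [F1Ex3, F2Ex3] <;> ring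
  · intro j; fin_cases j <;> simp [F1Ex3, F2Ex3]
  · intro j; norm_num
  · rw [fderiv_fEx3]
    ext v
    simp [Fin.sum_univ_three, gradProd, dc10, dc11, dc12, dc20, dc21, dc22,
      F1Ex3, F2Ex3, pj_apply]
    ring

set_option maxHeartbeats 1000000 in
lemma kkt_unique (t z : ℝ) (ht : 0 < t) (hz1 : -t ≤ z) (hz2 : z ≤ 0)
    (η ν1 ν2 : Fin 3 → ℝ)
    (h : KKTWith fEx3 F1Ex3 F2Ex3 t ![t, z, 1, 0] η ν1 ν2) :
    η = ![1, 0, 0] ∧ ν1 = ![0, 0, 2 - t] ∧ ν2 = 0 := by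
  have hc1 := h.comp_eta 1
  have hc2 := h.comp_eta 2
  have hn0 := h.comp_nu1 0
  have hn1 := h.comp_nu1 1
  have hm0 := h.comp_nu2 0
  have hm1 := h.comp_nu2 1
  have hm2 := h.comp_nu2 2
  simp [F1Ex3, F2Ex3] at hc1 hc2 hn0 hn1 hm0 hm1 hm2
  have hstat := h.stat
  rw [fderiv_fEx3] at hstat
  have e0 := DFunLike.congr_fun hstat (Pi.single (0 : Fin 4) 1)
  have e1 := DFunLike.congr_fun hstat (Pi.single (1 : Fin 4) 1)
  have e2 := DFunLike.congr_fun hstat (Pi.single (2 : Fin 4) 1)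
  have e3 := DFunLike.congr_fun hstat (Pi.single (3 : Fin 4) 1)
  simp only [Fin.sum_univ_three, gradProd, dc10, dc11, dc12, dc20, dc21, dc22,
    ContinuousLinearMap.add_apply, ContinuousLinearMap.sum_apply,
    ContinuousLinearMap.smul_apply, ContinuousLinearMap.neg_apply,
    pj_apply, smul_eq_mul] at e0 e1 e2 e3
  simp [F1Ex3, F2Ex3, Pi.single_apply] at e0 e1 e2 e3
  have hη2 : η 2 = 0 := by
    rcases hc2 with h' | h' <;> [exact h'; linarith]
  have hν10 : ν1 0 = 0 := by
    rcases hn0 with h' | h' <;> [exact h'; linarith]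
  have hν20 : ν2 0 = 0 := by
    rcases hm0 with h' | h'
    · exact h'
    · norm_num at h'
  have hν2 : ν2 = 0 := by
    funext j; fin_cases j <;> simp only [Pi.zero_apply] <;> assumption
  rw [hm1, hm2] at e3
  have hη1 : η 1 = 0 := by
    rcases hc1 with h' | h'
    · exact h'
    · rw [h'] at e3
      have h2 : η 1 * t = 0 := by nlinarith [e3]
      rcases mul_eq_zero.mp h2 with h'' | h''
      · exact h''
      · linarith
  have hν11 : ν1 1 = 0 := by rw [hη1] at e1; linarith
  have hη0 : η 0 = 1 := by nlinarith [e0]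
  have hν12 : ν1 2 = 2 - t := by rw [hη0, hν20, hη2] at e2; linarith
  refine ⟨?_, ?_, hν2⟩ <;> funext j <;> fin_cases j <;> simp <;> assumption

lemma fderiv_LagS (t : ℝ) (y : Fin 4 → ℝ) :
    fderiv ℝ (LagS fEx3 F1Ex3 F2Ex3 t ![1, 0, 0] ![0, 0, 2 - t] 0) y =
      (1 - y 2) • pj 0 + ((2 * y 2 - y 0 - (2 - t)) • pj 2 + (2 * y 3) • pj 3) := by
  have hL : LagS fEx3 F1Ex3 F2Ex3 t ![1, 0, 0] ![0, 0, 2 - t] (0 : Fin 3 → ℝ) =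
      fun v : Fin 4 → ℝ =>
        -v 0 + v 2 * v 2 + v 3 * v 3 - (t - v 0 * (2 - v 2)) - (2 - t) * (v 2 - 1) := by
    funext v; simp [LagS, fEx3, F1Ex3, F2Ex3, Fin.sum_univ_three]; ring
  have h := ((((hasF_coord 0 y).neg.add ((hasF_coord 2 y).mul (hasF_coord 2 y))).add
      ((hasF_coord 3 y).mul (hasF_coord 3 y))).sub
      (((hasF_coord 0 y).mul ((hasF_coord 2 y).const_sub 2)).const_sub t)).sub
      (((hasF_coord 2 y).sub_const 1).const_mul (2 - t))
  rw [hL, HasFDerivAt.fderiv (f := fun v : Fin 4 → ℝ =>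
    -v 0 + v 2 * v 2 + v 3 * v 3 - (t - v 0 * (2 - v 2)) - (2 - t) * (v 2 - 1)) h]
  ext v; simp [pj_apply]; ring

lemma hbil_e1 (t : ℝ) (x ζ : Fin 4 → ℝ) :
    hBil (LagS fEx3 F1Ex3 F2Ex3 t ![1, 0, 0] ![0, 0, 2 - t] 0) x (Pi.single 1 1) ζ = 0 := by
  have hG : (fderiv ℝ (LagS fEx3 F1Ex3 F2Ex3 t ![1, 0, 0] ![0, 0, 2 - t] 0)) =
      fun y : Fin 4 → ℝ =>
        (1 - y 2) • pj 0 + ((2 * y 2 - y 0 - (2 - t)) • pj 2 + (2 * y 3) • pj 3) :=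
    funext (fderiv_LagS t)
  have h := ((((hasF_coord 2 x).const_sub 1).smul_const (pj 0)).add
    ((((((hasF_coord 2 x).const_mul 2).sub (hasF_coord 0 x)).sub_const (2 - t)).smul_const
      (pj 2)).add (((hasF_coord 3 x).const_mul 2).smul_const (pj 3))))
  rw [hBil, iteratedFDeriv_two_apply, hG, HasFDerivAt.fderiv (f := fun y : Fin 4 → ℝ =>
    (1 - y 2) • pj 0 + ((2 * y 2 - y 0 - (2 - t)) • pj 2 + (2 * y 3) • pj 3)) h]
  simp [pj_apply, Pi.single_apply]

lemma e1_mem_T (t z : ℝ) (ht : 0 < t) (hz1 : -t < z) (hz2 : z < 0) :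
    (Pi.single 1 1 : Fin 4 → ℝ) ∈ TspaceS F1Ex3 F2Ex3 t ![t, z, 1, 0] := by
  refine ⟨?_, ?_, ?_⟩
  · intro j hj
    fin_cases j
    · simp [gradProd, dc10, dc20, F1Ex3, F2Ex3, pj_apply, Pi.single_apply]
    · exfalso; simp [Hset, F1Ex3, F2Ex3] at hj; linarith
    · exfalso; simp [Hset, F1Ex3, F2Ex3] at hj; linarith
  · intro j hj
    fin_cases j
    · exfalso; simp [N1set, F1Ex3] at hj; linarith
    · exfalso; simp [N1set, F1Ex3] at hj; linarith
    · simp [dc12, pj_apply, Pi.single_apply]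
  · intro j hj
    fin_cases j <;> exfalso <;> simp [N2set, F2Ex3] at hj <;> linarith

lemma not_nondeg (t z : ℝ) (ht : 0 < t) (hz1 : -t < z) (hz2 : z < 0) :
    ¬ NondegOn (hBil (LagS fEx3 F1Ex3 F2Ex3 t ![1, 0, 0] ![0, 0, 2 - t] 0) ![t, z, 1, 0])
        (TspaceS F1Ex3 F2Ex3 t ![t, z, 1, 0]) := by
  intro hnd
  have h := hnd (Pi.single 1 1) (e1_mem_T t z ht hz1 hz2)
    (fun ζ _ => hbil_e1 t ![t, z, 1, 0] ζ)
  have := congrFun h 1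
  simp at this


/-- Example (continuum of KKT points): for `0 < t ≤ 2` every point
`x_z = (t, z, 1, 0)` with `z ∈ [-t, 0]` is a KKT point of `S(t)`, each of them is
degenerate in the stated way, and `S(t)` has a continuum of KKT points near
`x̄ = (0,0,1,0)` for small `t`. -/
theorem example_continuum_kkt_points :
    (∀ t : ℝ, 0 < t → t ≤ 2 →
      (∀ z ∈ Set.Icc (-t) 0, ∃ η ν1 ν2 : Fin 3 → ℝ,
        KKTWith fEx3 F1Ex3 F2Ex3 t ![t, z, 1, 0] η ν1 ν2) ∧
      (KKTWith fEx3 F1Ex3 F2Ex3 t ![t, -t, 1, 0] ![1, 0, 0] ![0, 0, 2 - t] 0 ∧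
        (∀ η ν1 ν2 : Fin 3 → ℝ, KKTWith fEx3 F1Ex3 F2Ex3 t ![t, -t, 1, 0] η ν1 ν2 →
          η = ![1, 0, 0] ∧ ν1 = ![0, 0, 2 - t] ∧ ν2 = 0) ∧
        ¬ (∀ j ∈ N1set F1Ex3 ![t, -t, 1, 0], 0 < (![0, 0, 2 - t] : Fin 3 → ℝ) j)) ∧
      (KKTWith fEx3 F1Ex3 F2Ex3 t ![t, 0, 1, 0] ![1, 0, 0] ![0, 0, 2 - t] 0 ∧
        (∀ η ν1 ν2 : Fin 3 → ℝ, KKTWith fEx3 F1Ex3 F2Ex3 t ![t, 0, 1, 0] η ν1 ν2 →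
          η = ![1, 0, 0] ∧ ν1 = ![0, 0, 2 - t] ∧ ν2 = 0) ∧
        ¬ (∀ j ∈ Hset F1Ex3 F2Ex3 t ![t, 0, 1, 0], 0 < (![1, 0, 0] : Fin 3 → ℝ) j)) ∧
      (∀ z ∈ Set.Ioo (-t) 0,
        KKTWith fEx3 F1Ex3 F2Ex3 t ![t, z, 1, 0] ![1, 0, 0] ![0, 0, 2 - t] 0 ∧
        (∀ η ν1 ν2 : Fin 3 → ℝ, KKTWith fEx3 F1Ex3 F2Ex3 t ![t, z, 1, 0] η ν1 ν2 →
          η = ![1, 0, 0] ∧ ν1 = ![0, 0, 2 - t] ∧ ν2 = 0) ∧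
        ¬ NondegOn (hBil (LagS fEx3 F1Ex3 F2Ex3 t ![1, 0, 0] ![0, 0, 2 - t] 0) ![t, z, 1, 0])
            (TspaceS F1Ex3 F2Ex3 t ![t, z, 1, 0]))) ∧
    (∀ V ∈ 𝓝 xbarEx3, ∃ tbar > (0:ℝ), ∀ t ∈ Set.Ioo (0:ℝ) tbar,
      ∃ s : Set (Fin 4 → ℝ), s.Infinite ∧ ∀ y ∈ s, y ∈ V ∧
        ∃ η ν1 ν2 : Fin 3 → ℝ, KKTWith fEx3 F1Ex3 F2Ex3 t y η ν1 ν2) := by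
  constructor
  · intro t ht ht2
    refine ⟨?_, ⟨?_, ?_, ?_⟩, ⟨?_, ?_, ?_⟩, ?_⟩
    · exact fun z hz => ⟨_, _, _, kkt_main t z ht ht2 hz.1 hz.2⟩
    · exact kkt_main t (-t) ht ht2 le_rfl (by linarith)
    · exact fun η ν1 ν2 h => kkt_unique t (-t) ht le_rfl (by linarith) η ν1 ν2 h
    · intro hall
      have hm : (1 : Fin 3) ∈ N1set F1Ex3 ![t, -t, 1, 0] := by
        simp [N1set, F1Ex3]
      have := hall 1 hm
      simp at this
    · exact kkt_main t 0 ht ht2 (by linarith) le_rfl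
    · exact fun η ν1 ν2 h => kkt_unique t 0 ht (by linarith) le_rfl η ν1 ν2 h
    · intro hall
      have hm : (1 : Fin 3) ∈ Hset F1Ex3 F2Ex3 t ![t, 0, 1, 0] := by
        simp [Hset, F1Ex3, F2Ex3]
      have := hall 1 hm
      simp at this
    · intro z hz
      exact ⟨kkt_main t z ht ht2 hz.1.le hz.2.le,
        fun η ν1 ν2 h => kkt_unique t z ht hz.1.le hz.2.le η ν1 ν2 h,
        not_nondeg t z ht hz.1 hz.2⟩
  · intro V hV
    rcases Metric.mem_nhds_iff.mp hV with ⟨ε, hε, hball⟩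
    refine ⟨min ε 2, by positivity, ?_⟩
    rintro t ⟨ht0, htlt⟩
    have ht2 : t ≤ 2 := le_of_lt (lt_of_lt_of_le htlt (min_le_right _ _))
    have htε : t < ε := lt_of_lt_of_le htlt (min_le_left _ _)
    refine ⟨(fun z => ![t, z, 1, 0]) '' Set.Icc (-t) 0, ?_, ?_⟩
    · refine Set.Infinite.image ?_ (Set.Icc_infinite (by linarith))
      intro a _ b _ hab
      simpa using congrFun hab 1
    · rintro y ⟨z, hz, rfl⟩
      refine ⟨hball ?_, ![1, 0, 0], ![0, 0, 2 - t], 0, kkt_main t z ht0 ht2 hz.1 hz.2⟩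
      rw [Metric.mem_ball, dist_pi_lt_iff hε]
      intro i
      obtain ⟨hz1, hz2⟩ := hz
      fin_cases i <;> simp [xbarEx3, Real.dist_eq, abs_lt] <;> and_intros <;> linarith


end MPCCPaper
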